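/- There exists an optimal oblivious policy: for every nonempty finite state space S, nonempty finite action space A, transition kernel p, reward function r with values in [0,1], discount factor γ ∈ [0,1) and horizon τ, there exists a policy π* : S → ℕ → A such that V_{π*} l s ≥ V_π l s for every policy π : S → ℕ → A, every time index l ≤ τ, and every state s ∈ S. -/

import Mathlib

/-- There exists an optimal oblivious policy: for every nonempty finite state space `S`,
nonempty finite action space `A`, transition kernel `p`, reward function `r` with values in
`[0,1]`, discount factor `γ ∈ [0,1)` and horizon `τ`, there exists a policy `π* : S → ℕ → A`
such that `V π* l s ≥ V π l s` for every policy `π`, every `l ≤ τ`, and every state `s`. -/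
theorem exists_optimal_oblivious_policy
    {S A : Type*} [Fintype S] [Nonempty S] [Fintype A] [Nonempty A]
    (p : S → A → S → ℝ)
    (hp_nonneg : ∀ s a s', 0 ≤ p s a s')
    (hp_sum : ∀ s a, ∑ s', p s a s' = 1)
    (r : S → A → S → ℝ)
    (hr : ∀ s a s', 0 ≤ r s a s' ∧ r s a s' ≤ 1)
    (γ : ℝ) (hγ0 : 0 ≤ γ) (hγ1 : γ < 1) (τ : ℕ)
    (V : (S → ℕ → A) → ℕ → S → ℝ)
    (hV_ge : ∀ (π : S → ℕ → A) (l : ℕ) (s : S), τ ≤ l → V π l s = 0)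
    (hV_lt : ∀ (π : S → ℕ → A) (l : ℕ) (s : S), l < τ →
      V π l s = ∑ s', p s (π s l) s' * (r s (π s l) s' + γ * V π (l + 1) s')) :
    ∃ πstar : S → ℕ → A, ∀ (π : S → ℕ → A) (l : ℕ), l ≤ τ → ∀ s : S,
      V πstar l s ≥ V π l s := by
  classical
  -- optimal value with k steps remaining
  set U : ℕ → S → ℝ := fun k => Nat.rec (fun _ => 0)
    (fun k Uk s => Finset.univ.sup' Finset.univ_nonempty
      (fun a => ∑ s', p s a s' * (r s a s' + γ * Uk s'))) k with hU
  have hU0 : ∀ s, U 0 s = 0 := fun s => rfl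
  have hUsucc : ∀ k s, U (k + 1) s = Finset.univ.sup' Finset.univ_nonempty
      (fun a => ∑ s', p s a s' * (r s a s' + γ * U k s')) := fun k s => rfl
  have hargmax : ∀ k s, ∃ a : A,
      U (k + 1) s = ∑ s', p s a s' * (r s a s' + γ * U k s') := by
    intro k s
    obtain ⟨a, _, ha⟩ := Finset.exists_mem_eq_sup' (Finset.univ_nonempty (α := A))
      (fun a => ∑ s', p s a s' * (r s a s' + γ * U k s'))
    exact ⟨a, ha⟩
  set πstar : S → ℕ → A := fun s l => Classical.choose (hargmax (τ - (l + 1)) s) with hπ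
  have hπspec : ∀ s l, U (τ - (l + 1) + 1) s =
      ∑ s', p s (πstar s l) s' * (r s (πstar s l) s' + γ * U (τ - (l + 1)) s') :=
    fun s l => Classical.choose_spec (hargmax (τ - (l + 1)) s)
  -- V πstar achieves U
  have hVstar : ∀ k l, τ - l = k → ∀ s, V πstar l s = U k s := by
    intro k
    induction k with
    | zero =>
      intro l hl s
      rw [hV_ge _ _ _ (Nat.sub_eq_zero_iff_le.mp hl), hU0]
    | succ k ih =>
      intro l hl s
      have hlτ : l < τ := by omega
      have hl1 : τ - (l + 1) = k := by omega
      rw [hV_lt _ _ _ hlτ]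
      have := hπspec s l
      rw [hl1] at this
      rw [this]
      congr 1
      ext s'
      rw [ih (l + 1) hl1 s']
  -- U upper bounds every policy value
  have hVle : ∀ k l, τ - l = k → ∀ (π : S → ℕ → A) s, V π l s ≤ U k s := by
    intro k
    induction k with
    | zero =>
      intro l hl π s
      rw [hV_ge _ _ _ (Nat.sub_eq_zero_iff_le.mp hl), hU0]
    | succ k ih =>
      intro l hl π s
      have hlτ : l < τ := by omega
      have hl1 : τ - (l + 1) = k := by omega
      rw [hV_lt _ _ _ hlτ]
      calc ∑ s', p s (π s l) s' * (r s (π s l) s' + γ * V π (l + 1) s')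
          ≤ ∑ s', p s (π s l) s' * (r s (π s l) s' + γ * U k s') := by
            apply Finset.sum_le_sum
            intro s' _
            apply mul_le_mul_of_nonneg_left _ (hp_nonneg s (π s l) s')
            apply add_le_add le_rfl
            exact mul_le_mul_of_nonneg_left (ih (l + 1) hl1 π s') hγ0
        _ ≤ U (k + 1) s := by
            rw [hUsucc]
            exact Finset.le_sup' (fun a => ∑ s', p s a s' * (r s a s' + γ * U k s')) (Finset.mem_univ (π s l))
  refine ⟨πstar, fun π l hl s => ?_⟩
  rw [hVstar (τ - l) l rfl s]
  exact hVle (τ - l) l rfl π s
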